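/- arXiv:1205.5345 — 3 statements merged into one kernel-verified Lean document; each statement's English description precedes it below -/
import Mathlib

section
/- Let ρ : EuclideanSpace ℝ (Fin 2) → ℂ be a function whose imaginary part satisfies Im ρ(x) ≥ ρ_b for all x, for some constant ρ_b > 0. If u : EuclideanSpace ℝ (Fin 2) → ℂ is twice continuously differentiable, has compact support, and satisfies the dissipative Helmholtz equation Δu(x) + ρ(x)·u(x) = 0 for every x, then u is identically zero. -/
open scoped BigOperators

/-- The Laplace operator on functions on the Euclidean plane: the sum of the second
partial derivatives with respect to the standard orthonormal basis. -/
noncomputable def laplacian (f : EuclideanSpace ℝ (Fin 2) → ℂ)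
    (x : EuclideanSpace ℝ (Fin 2)) : ℂ :=
  ∑ i : Fin 2,
    fderiv ℝ (fun y => fderiv ℝ f y (EuclideanSpace.single i (1 : ℝ))) x
      (EuclideanSpace.single i (1 : ℝ))

namespace HelmholtzAux

open MeasureTheory Complex

noncomputable def e (i : Fin 2) : EuclideanSpace ℝ (Fin 2) := EuclideanSpace.single i (1 : ℝ)

noncomputable def D (u : EuclideanSpace ℝ (Fin 2) → ℂ) (i : Fin 2)
    (y : EuclideanSpace ℝ (Fin 2)) : ℂ := fderiv ℝ u y (e i)

lemma laplacian_eq (u : EuclideanSpace ℝ (Fin 2) → ℂ) (x : EuclideanSpace ℝ (Fin 2)) :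
    laplacian u x = ∑ i : Fin 2, fderiv ℝ (D u i) x (e i) := rfl

end HelmholtzAux

open MeasureTheory Complex HelmholtzAux

theorem dissipative_helmholtz_uniqueness
    (ρ : EuclideanSpace ℝ (Fin 2) → ℂ) (ρ_b : ℝ) (hρ_b : 0 < ρ_b)
    (hρ : ∀ x, ρ_b ≤ (ρ x).im)
    (u : EuclideanSpace ℝ (Fin 2) → ℂ)
    (hu : ContDiff ℝ 2 u) (hsupp : HasCompactSupport u)
    (hsol : ∀ x, laplacian u x + ρ x * u x = 0) :
    u = 0 := by
  classical
  have hud : Differentiable ℝ u := hu.differentiable two_ne_zero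
  have hcu : Continuous u := hu.continuous
  have int : ∀ f : EuclideanSpace ℝ (Fin 2) → ℂ, Continuous f → HasCompactSupport f →
      Integrable f := fun f hc hs => hc.integrable_of_hasCompactSupport hs
  have hDc : ∀ i, ContDiff ℝ 1 (D u i) := fun i =>
    (hu.fderiv_right (by norm_num)).clm_apply contDiff_const
  have hDcont : ∀ i, Continuous (D u i) := fun i => (hDc i).continuous
  have hDd : ∀ i, Differentiable ℝ (D u i) := fun i => (hDc i).differentiable one_ne_zero
  have hDsupp : ∀ i, HasCompactSupport (D u i) := fun i => hsupp.fderiv_apply ℝ (e i)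
  have hD2cont : ∀ i, Continuous fun x => fderiv ℝ (D u i) x (e i) := fun i =>
    (ContinuousLinearMap.apply ℝ ℂ (e i)).continuous.comp ((hDc i).continuous_fderiv one_ne_zero)
  have hD2supp : ∀ i, HasCompactSupport fun x => fderiv ℝ (D u i) x (e i) := fun i =>
    (hDsupp i).fderiv_apply ℝ (e i)
  -- the conjugate of u
  have hucCD : ContDiff ℝ 2 fun x => (starRingEnd ℂ) (u x) := Complex.conjCLE.contDiff.comp hu
  have hucd : Differentiable ℝ fun x => (starRingEnd ℂ) (u x) := hucCD.differentiable two_ne_zero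
  have hucc : Continuous fun x => (starRingEnd ℂ) (u x) := hucCD.continuous
  have hucsupp : HasCompactSupport fun x => (starRingEnd ℂ) (u x) :=
    hsupp.comp_left (map_zero _)
  have hfuc : ∀ x, fderiv ℝ (fun y => (starRingEnd ℂ) (u y)) x
      = ((Complex.conjCLE : ℂ ≃L[ℝ] ℂ) : ℂ →L[ℝ] ℂ).comp (fderiv ℝ u x) := fun x =>
    (((Complex.conjCLE : ℂ ≃L[ℝ] ℂ) : ℂ →L[ℝ] ℂ).hasFDerivAt.comp x (hud x).hasFDerivAt).fderiv
  have hfuc' : ∀ i x, fderiv ℝ (fun y => (starRingEnd ℂ) (u y)) x (e i)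
      = (starRingEnd ℂ) (D u i x) := fun i x => by rw [hfuc]; rfl
  -- the Laplacian is continuous
  have hlapcont : Continuous (laplacian u) := by
    have : laplacian u = fun x => ∑ i : Fin 2, fderiv ℝ (D u i) x (e i) := rfl
    rw [this]
    exact continuous_finset_sum _ fun i _ => hD2cont i
  -- integration by parts in each direction
  have ibp : ∀ i, ∫ x, (starRingEnd ℂ) (u x) * fderiv ℝ (D u i) x (e i)
      = - ∫ x, (starRingEnd ℂ) (D u i x) * D u i x := by
    intro i
    have hre : (fun x => fderiv ℝ (fun y => (starRingEnd ℂ) (u y)) x (e i) * D u i x)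
        = fun x => (starRingEnd ℂ) (D u i x) * D u i x := funext fun x => by rw [hfuc' i x]
    have h1 : Integrable fun x =>
        fderiv ℝ (fun y => (starRingEnd ℂ) (u y)) x (e i) * D u i x := by
      rw [hre]
      exact int _ ((continuous_conj.comp (hDcont i)).mul (hDcont i))
        (((hDsupp i).comp_left (map_zero _)).mul_right)
    have h2 : Integrable fun x => (starRingEnd ℂ) (u x) * fderiv ℝ (D u i) x (e i) :=
      int _ (hucc.mul (hD2cont i)) hucsupp.mul_right
    have h3 : Integrable fun x => (starRingEnd ℂ) (u x) * D u i x :=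
      int _ (hucc.mul (hDcont i)) hucsupp.mul_right
    rw [integral_mul_fderiv_eq_neg_fderiv_mul_of_integrable h1 h2 h3 (fun x _ => hucd x) (fun x _ => hDd i x), hre]
  -- the basic identity
  have hI : ∫ x, (starRingEnd ℂ) (u x) * laplacian u x
      = ∑ i : Fin 2, - ∫ x, (starRingEnd ℂ) (D u i x) * D u i x := by
    have hexp : (fun x => (starRingEnd ℂ) (u x) * laplacian u x)
        = fun x => ∑ i : Fin 2, (starRingEnd ℂ) (u x) * fderiv ℝ (D u i) x (e i) :=
      funext fun x => by rw [laplacian_eq, Finset.mul_sum]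
    rw [hexp, integral_finset_sum _ fun i _ =>
      int (fun x => (starRingEnd ℂ) (u x) * fderiv ℝ (D u i) x (e i))
        (hucc.mul (hD2cont i)) hucsupp.mul_right]
    exact Finset.sum_congr rfl fun i _ => ibp i
  -- the imaginary part of the basic identity is zero
  have hIm0 : (∫ x, (starRingEnd ℂ) (u x) * laplacian u x).im = 0 := by
    have hreal : ∀ i : Fin 2, ∫ x, (starRingEnd ℂ) (D u i x) * D u i x
        = (↑(∫ x, Complex.normSq (D u i x)) : ℂ) := by
      intro i
      have : (fun x => (starRingEnd ℂ) (D u i x) * D u i x)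
          = fun x => ((Complex.normSq (D u i x) : ℝ) : ℂ) := funext fun x => by
        rw [mul_comm, Complex.mul_conj]
      rw [this]
      exact integral_ofReal
    rw [hI, Fin.sum_univ_two, hreal 0, hreal 1]
    simp
  -- rewrite the integrand using the equation
  have hwa : ∀ x, (starRingEnd ℂ) (u x) * laplacian u x
      = -(ρ x * ((Complex.normSq (u x) : ℝ) : ℂ)) := by
    intro x
    have hl : laplacian u x = -(ρ x * u x) := by linear_combination hsol x
    rw [hl, show (starRingEnd ℂ) (u x) * -(ρ x * u x)
      = -(ρ x * (u x * (starRingEnd ℂ) (u x))) from by ring, Complex.mul_conj]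
  have hintw : Integrable fun x => (starRingEnd ℂ) (u x) * laplacian u x :=
    int _ (hucc.mul hlapcont) hucsupp.mul_right
  -- the imaginary part as a real integral
  have h1 : ∀ x, (ρ x).im * Complex.normSq (u x)
      = -(((starRingEnd ℂ) (u x) * laplacian u x).im) := by
    intro x
    rw [hwa x]
    simp [Complex.mul_im]
  have hgeq : (fun x => (ρ x).im * Complex.normSq (u x))
      = fun x => -(((starRingEnd ℂ) (u x) * laplacian u x).im) := funext h1
  have him : ∫ x, (ρ x).im * Complex.normSq (u x) = 0 := by
    have h2 := integral_im (𝕜 := ℂ) hintw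
    simp only [RCLike.im_to_complex] at h2
    rw [hgeq, integral_neg, h2, hIm0, neg_zero]
  have hgc : Continuous fun x => (ρ x).im * Complex.normSq (u x) := by
    rw [hgeq]
    exact (Complex.continuous_im.comp (hucc.mul hlapcont)).neg
  have hgint : Integrable fun x => (ρ x).im * Complex.normSq (u x) := by
    rw [hgeq]
    exact (hintw.im).neg
  have hg0 : 0 ≤ fun x => (ρ x).im * Complex.normSq (u x) := fun x =>
    mul_nonneg (hρ_b.le.trans (hρ x)) (Complex.normSq_nonneg _)
  have hae : (fun x => (ρ x).im * Complex.normSq (u x)) =ᵐ[volume] 0 :=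
    (integral_eq_zero_iff_of_nonneg hg0 hgint).mp him
  have hg : (fun x => (ρ x).im * Complex.normSq (u x)) = 0 :=
    (hgc.ae_eq_iff_eq volume continuous_const).mp hae
  funext x
  have hx : (ρ x).im * Complex.normSq (u x) = 0 := congrFun hg x
  have hρx : 0 < (ρ x).im := lt_of_lt_of_le hρ_b (hρ x)
  have : Complex.normSq (u x) = 0 := by
    rcases mul_eq_zero.mp hx with h | h
    · exact absurd h hρx.ne'
    · exact h
  simpa using Complex.normSq_eq_zero.mp this
end

section
/- Let L > 0 and let φ, ψ : ℝ → ℂ be continuous with compact support. Then the Floquet–Bloch transform is an isometry for the L² inner products: ∫_{k = −π/L}^{π/L} ∫_{y = −L/2}^{L/2} Fφ(y; k) · conj(Fψ(y; k)) dy dk = ∫_{ℝ} φ(y) · conj(ψ(y)) dy. -/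
open scoped Real
open MeasureTheory

/-- The Floquet–Bloch transform of period `L` of a function `φ : ℝ → ℂ`:
`Fφ(y; k) = √(L/(2π)) · Σ_{q ∈ ℤ} φ(y + qL) e^{−iqkL}`. -/
noncomputable def floquetBloch (L : ℝ) (φ : ℝ → ℂ) (y k : ℝ) : ℂ :=
  (Real.sqrt (L / (2 * π)) : ℂ) *
    ∑' q : ℤ, φ (y + q * L) * Complex.exp (-Complex.I * q * k * L)

theorem floquetBloch_isometry (L : ℝ) (hL : 0 < L) (φ ψ : ℝ → ℂ)
    (hcontφ : Continuous φ) (hsuppφ : HasCompactSupport φ)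
    (hcontψ : Continuous ψ) (hsuppψ : HasCompactSupport ψ) :
    (∫ k in (-π / L)..(π / L), ∫ y in (-L / 2)..(L / 2),
        floquetBloch L φ y k * (starRingEnd ℂ) (floquetBloch L ψ y k))
      = ∫ y : ℝ, φ y * (starRingEnd ℂ) (ψ y) := by
  have hπ : (0:ℝ) < π := Real.pi_pos
  have hL0 : (L:ℝ) ≠ 0 := ne_of_gt hL
  -- support bound
  obtain ⟨Rφ, hRφ⟩ := hsuppφ.isBounded.subset_closedBall 0
  obtain ⟨Rψ, hRψ⟩ := hsuppψ.isBounded.subset_closedBall 0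
  set R : ℝ := max (max Rφ Rψ) 0 with hRdef
  have hR0 : 0 ≤ R := le_max_right _ _
  have hφ0 : ∀ x : ℝ, R < |x| → φ x = 0 := by
    intro x hx
    apply image_eq_zero_of_notMem_tsupport
    intro hmem
    have h1 := hRφ hmem
    rw [Metric.mem_closedBall, Real.dist_eq, sub_zero] at h1
    have h2 : Rφ ≤ R := le_max_of_le_left (le_max_left _ _)
    linarith
  have hψ0 : ∀ x : ℝ, R < |x| → ψ x = 0 := by
    intro x hx
    apply image_eq_zero_of_notMem_tsupport
    intro hmem
    have h1 := hRψ hmem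
    rw [Metric.mem_closedBall, Real.dist_eq, sub_zero] at h1
    have h2 : Rψ ≤ R := le_max_of_le_left (le_max_right _ _)
    linarith
  set N : ℕ := ⌈R / L⌉₊ + 1 with hNdef
  have hNL : R + L ≤ (N:ℝ) * L := by
    have h1 : R / L ≤ (⌈R/L⌉₊ : ℝ) := Nat.le_ceil _
    have h2 : R ≤ (⌈R/L⌉₊ : ℝ) * L := by
      rw [div_le_iff₀ hL] at h1; exact h1
    have : ((N:ℝ)) = (⌈R/L⌉₊ : ℝ) + 1 := by push_cast [hNdef]; ring
    nlinarith
  set F : Finset ℤ := Finset.Icc (-(N:ℤ)) (N:ℤ) with hFdef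
  -- vanishing outside F
  have hvan : ∀ q : ℤ, q ∉ F → ∀ y : ℝ, |y| ≤ L/2 →
      φ (y + q*L) = 0 ∧ ψ (y + q*L) = 0 := by
    intro q hq y hy
    have hq'' : (N:ℝ) + 1 ≤ |(q:ℝ)| := by
      simp only [hFdef, Finset.mem_Icc, not_and_or, not_le] at hq
      rw [le_abs]
      rcases hq with h | h
      · right
        have : (N:ℤ) + 1 ≤ -q := by omega
        exact_mod_cast this
      · left
        have : (N:ℤ) + 1 ≤ q := by omega
        exact_mod_cast this
    have habs : R < |y + q*L| := by
      have h1 : |(q:ℝ)*L| ≤ |y + q*L| + |y| := by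
        have := abs_add_le (y + q*L) (-y)
        simpa using this
      have h2 : |(q:ℝ)*L| = |(q:ℝ)| * L := by
        rw [abs_mul, abs_of_pos hL]
      nlinarith
    exact ⟨hφ0 _ habs, hψ0 _ habs⟩
  -- pointwise product formula
  have hc2 : ((Real.sqrt (L / (2 * π)) : ℝ) : ℂ) * ((Real.sqrt (L / (2 * π)) : ℝ) : ℂ)
      = ((L/(2*π) : ℝ) : ℂ) := by
    rw [← Complex.ofReal_mul, Real.mul_self_sqrt (by positivity)]
  have hfb : ∀ y k : ℝ, |y| ≤ L/2 →
      floquetBloch L φ y k * (starRingEnd ℂ) (floquetBloch L ψ y k)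
      = ((L/(2*π) : ℝ) : ℂ) * ∑ q ∈ F, ∑ r ∈ F,
          (φ (y+q*L) * (starRingEnd ℂ) (ψ (y+r*L)))
            * Complex.exp (-Complex.I*((q:ℂ)-(r:ℂ))*k*L) := by
    intro y k hy
    simp only [floquetBloch]
    rw [tsum_eq_sum (s := F)
        (fun q hq => by rw [(hvan q hq y hy).1, zero_mul]),
      tsum_eq_sum (s := F)
        (fun r hr => by rw [(hvan r hr y hy).2, zero_mul])]
    rw [map_mul, map_sum, Complex.conj_ofReal, mul_mul_mul_comm, hc2, Finset.sum_mul_sum]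
    congr 1
    refine Finset.sum_congr rfl fun q hq => Finset.sum_congr rfl fun r hr => ?_
    rw [map_mul, ← Complex.exp_conj, mul_mul_mul_comm, ← Complex.exp_add]
    congr 2
    simp only [map_mul, map_neg, Complex.conj_I, Complex.conj_ofReal, map_intCast]
    ring
  -- inner y-integral
  set A : ℤ → ℤ → ℂ := fun q r =>
    ∫ y in (-L/2)..(L/2), φ (y + q*L) * (starRingEnd ℂ) (ψ (y + r*L)) with hAdef
  have hinner : ∀ k : ℝ,
      (∫ y in (-L/2)..(L/2),
        floquetBloch L φ y k * (starRingEnd ℂ) (floquetBloch L ψ y k))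
      = ((L/(2*π) : ℝ) : ℂ) * ∑ q ∈ F, ∑ r ∈ F,
          A q r * Complex.exp (-Complex.I*((q:ℂ)-(r:ℂ))*k*L) := by
    intro k
    rw [intervalIntegral.integral_congr (g := fun y => ((L/(2*π) : ℝ) : ℂ) * ∑ q ∈ F, ∑ r ∈ F,
          (φ (y+q*L) * (starRingEnd ℂ) (ψ (y+r*L)))
            * Complex.exp (-Complex.I*((q:ℂ)-(r:ℂ))*k*L))
        (fun y hy => by
          apply hfb y k
          rw [Set.uIcc_of_le (by linarith)] at hy
          rw [abs_le]
          exact ⟨by linarith [hy.1], hy.2⟩)]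
    rw [intervalIntegral.integral_const_mul,
      intervalIntegral.integral_finset_sum (fun q _ => by
        apply Continuous.intervalIntegrable
        simp only [starRingEnd_apply]
        fun_prop)]
    congr 1
    refine Finset.sum_congr rfl fun q hq => ?_
    rw [intervalIntegral.integral_finset_sum (fun r _ => by
        apply Continuous.intervalIntegrable
        simp only [starRingEnd_apply]
        fun_prop)]
    refine Finset.sum_congr rfl fun r hr => ?_
    rw [intervalIntegral.integral_mul_const]
  -- orthogonality in k
  have horth : ∀ q r : ℤ,
      (∫ k in (-π/L)..(π/L), Complex.exp (-Complex.I*((q:ℂ)-(r:ℂ))*(k:ℂ)*L))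
      = if q = r then ((2*π/L : ℝ) : ℂ) else 0 := by
    intro q r
    by_cases h : q = r
    · subst h
      simp only [sub_self, mul_zero, zero_mul, neg_zero, Complex.exp_zero, if_true]
      rw [intervalIntegral.integral_const, Complex.real_smul, mul_one]
      push_cast
      ring
    · rw [if_neg h]
      have hc : (-Complex.I * ((q:ℂ) - (r:ℂ)) * (L:ℂ)) ≠ 0 := by
        apply mul_ne_zero (mul_ne_zero _ _)
        · exact Complex.ofReal_ne_zero.mpr hL0
        · exact neg_ne_zero.mpr Complex.I_ne_zero
        · rw [sub_ne_zero]
          exact_mod_cast fun hh => h (by exact_mod_cast hh)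
      have harg : ∀ k : ℝ, -Complex.I*((q:ℂ)-(r:ℂ))*(k:ℂ)*L
          = (-Complex.I * ((q:ℂ) - (r:ℂ)) * (L:ℂ)) * k := fun k => by ring
      simp_rw [harg]
      rw [integral_exp_mul_complex hc]
      have hLC : ((L:ℝ):ℂ) ≠ 0 := Complex.ofReal_ne_zero.mpr hL0
      have harg1 : (-Complex.I * ((q:ℂ) - (r:ℂ)) * (L:ℂ)) * ((π/L : ℝ) : ℂ)
          = -Complex.I * (((q - r : ℤ)):ℂ) * (π:ℂ) := by
        push_cast
        field_simp
      have harg2 : (-Complex.I * ((q:ℂ) - (r:ℂ)) * (L:ℂ)) * ((-π/L : ℝ) : ℂ)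
          = -Complex.I * (((q - r : ℤ)):ℂ) * (π:ℂ) + ((q - r : ℤ) : ℂ) * (2*π*Complex.I) := by
        push_cast
        field_simp
        ring
      rw [harg1, harg2, Complex.exp_add, Complex.exp_int_mul_two_pi_mul_I, mul_one,
        sub_self, zero_div]
  -- outer integral
  rw [intervalIntegral.integral_congr (g := fun k : ℝ => ((L/(2*π) : ℝ) : ℂ) *
        ∑ q ∈ F, ∑ r ∈ F, A q r * Complex.exp (-Complex.I*((q:ℂ)-(r:ℂ))*k*L))
      (fun k _ => hinner k)]
  rw [intervalIntegral.integral_const_mul,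
    intervalIntegral.integral_finset_sum (fun q _ => by
      apply Continuous.intervalIntegrable
      fun_prop)]
  have hsum : ∀ q ∈ F, (∫ k in (-π/L)..(π/L),
      ∑ r ∈ F, A q r * Complex.exp (-Complex.I*((q:ℂ)-(r:ℂ))*k*L))
      = A q q * ((2*π/L : ℝ) : ℂ) := by
    intro q hq
    rw [intervalIntegral.integral_finset_sum (fun r _ => by
      apply Continuous.intervalIntegrable
      fun_prop)]
    rw [Finset.sum_congr rfl (fun r _ => by
      rw [intervalIntegral.integral_const_mul, horth q r])]
    simp only [mul_ite, mul_zero]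
    rw [Finset.sum_ite_eq F q (fun r => A q r * ((2*π/L : ℝ) : ℂ)), if_pos hq]
  rw [Finset.sum_congr rfl hsum, Finset.mul_sum]
  have h1 : ((L/(2*π) : ℝ) : ℂ) * ((2*π/L : ℝ) : ℂ) = 1 := by
    rw [← Complex.ofReal_mul, show L/(2*π)*(2*π/L) = (1:ℝ) by field_simp,
      Complex.ofReal_one]
  rw [Finset.sum_congr rfl (fun q _ => by
    rw [mul_comm (A q q), ← mul_assoc, h1, one_mul])]
  -- translate each diagonal term
  have hgc : Continuous (fun y : ℝ => φ y * (starRingEnd ℂ) (ψ y)) := by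
    simp only [starRingEnd_apply]
    fun_prop
  have hA : ∀ q : ℤ, A q q
      = ∫ y in (-L/2 + (q:ℝ)*L)..(L/2 + (q:ℝ)*L), φ y * (starRingEnd ℂ) (ψ y) := by
    intro q
    exact intervalIntegral.integral_comp_add_right
      (fun z => φ z * (starRingEnd ℂ) (ψ z)) ((q:ℝ)*L)
  rw [Finset.sum_congr rfl (fun q _ => hA q)]
  -- reindex and telescope
  have hmap : F = (Finset.range (2*N+1)).map
      ⟨fun j : ℕ => (j:ℤ) - N, show Function.Injective (fun j : ℕ => (j:ℤ) - N) from by intro a b h; simpa using h⟩ := by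
    ext q
    simp only [hFdef, Finset.mem_Icc, Finset.mem_map, Finset.mem_range,
      Function.Embedding.coeFn_mk]
    constructor
    · rintro ⟨h1, h2⟩
      exact ⟨(q + N).toNat, by omega, by omega⟩
    · rintro ⟨j, hj, rfl⟩
      omega
  rw [hmap, Finset.sum_map]
  have htel := intervalIntegral.sum_integral_adjacent_intervals (μ := volume)
      (f := fun y : ℝ => φ y * (starRingEnd ℂ) (ψ y))
      (a := fun j : ℕ => ((j:ℝ) - N)*L - L/2) (n := 2*N+1)
      (fun i _ => hgc.intervalIntegrable _ _)
  simp only [Function.Embedding.coeFn_mk]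
  rw [Finset.sum_congr rfl (fun j hj => by
    show (∫ y in (-L/2 + (((j:ℤ) - (N:ℤ) : ℤ):ℝ)*L)..(L/2 + (((j:ℤ) - (N:ℤ) : ℤ):ℝ)*L),
        φ y * (starRingEnd ℂ) (ψ y))
      = ∫ y in (((j:ℝ) - N)*L - L/2)..((((j+1:ℕ):ℝ) - N)*L - L/2),
        φ y * (starRingEnd ℂ) (ψ y)
    congr 1 <;> push_cast <;> ring)]
  rw [htel]
  apply intervalIntegral.integral_eq_integral_of_support_subset
  intro x hx
  have hφx : φ x ≠ 0 := fun h0 => hx (by simp [h0])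
  have hxR : |x| ≤ R := by
    by_contra hc
    exact hφx (hφ0 x (by linarith [not_le.mp hc]))
  obtain ⟨hx1, hx2⟩ := abs_le.mp hxR
  have hNL' : R + L ≤ ((⌈R/L⌉₊ : ℝ) + 1) * L := by
    have := hNL
    push_cast [hNdef] at this
    linarith
  constructor
  · push_cast
    nlinarith [hNL', hL, hx1]
  · push_cast
    nlinarith [hNL', hL, hx2]
end

section
/- Let (X, μ) be a measure space and Θ : X → X a measurable measure-preserving bijection with measurable inverse such that Θ ∘ Θ ∘ Θ = id. Let S ⊆ X be a measurable set such that the three sets S, Θ(S), Θ(Θ(S)) cover X up to a μ-null set and have pairwise μ-null intersections. Given a measurable ψ : X → ℂ that is square-integrable on S, define its symmetric extension Eψ : X → ℂ by Eψ = ψ on S, Eψ = ψ ∘ Θ⁻¹ on Θ(S), and Eψ = ψ ∘ Θ⁻¹ ∘ Θ⁻¹ on Θ(Θ(S)). Then for every square-integrable φ : X → ℂ satisfying φ ∘ Θ = φ μ-almost everywhere, one has ∫_S φ · conj(ψ) dμ = (1/3) · ∫_X φ · conj(Eψ) dμ. -/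
open MeasureTheory Classical in

theorem restriction_extension_duality
    {X : Type*} [MeasurableSpace X] (μ : Measure X)
    (Θ : X ≃ X) (hΘmeas : Measurable Θ) (hΘinv : Measurable Θ.symm)
    (hΘpres : MeasurePreserving Θ μ μ)
    (hΘ3 : ∀ x, Θ (Θ (Θ x)) = x)
    (S : Set X) (hS : MeasurableSet S)
    (hcover : μ ((S ∪ Θ '' S ∪ Θ '' (Θ '' S))ᶜ) = 0)
    (h01 : μ (S ∩ Θ '' S) = 0)
    (h02 : μ (S ∩ Θ '' (Θ '' S)) = 0)
    (h12 : μ ((Θ '' S) ∩ Θ '' (Θ '' S)) = 0)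
    (ψ : X → ℂ) (hψmeas : Measurable ψ) (hψ : MemLp ψ 2 (μ.restrict S))
    (Eψ : X → ℂ)
    (hEψ : Eψ = fun x =>
      if x ∈ S then ψ x
      else if x ∈ Θ '' S then ψ (Θ.symm x)
      else ψ (Θ.symm (Θ.symm x)))
    (φ : X → ℂ) (hφ : MemLp φ 2 μ)
    (hφΘ : (φ ∘ Θ) =ᵐ[μ] φ) :
    ∫ x in S, φ x * (starRingEnd ℂ) (ψ x) ∂μ
      = (1 / 3) * ∫ x, φ x * (starRingEnd ℂ) (Eψ x) ∂μ := by
  classical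
  set B := Θ '' S with hBdef
  set C := Θ '' (Θ '' S) with hCdef
  set f : X → ℂ := fun x => φ x * (starRingEnd ℂ) (Eψ x) with hfdef
  -- measurable equiv
  let Θm : X ≃ᵐ X := { toEquiv := Θ, measurable_toFun := hΘmeas, measurable_invFun := hΘinv }
  have hemb : MeasurableEmbedding (Θ : X → X) := Θm.measurableEmbedding
  have hsymm_eq : ∀ x, Θ.symm x = Θ (Θ x) := by
    intro x
    rw [Equiv.symm_apply_eq]
    exact (hΘ3 x).symm
  have hBpre : B = Θ.symm ⁻¹' S := Θ.image_eq_preimage_symm S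
  have hCpre : C = Θ.symm ⁻¹' B := Θ.image_eq_preimage_symm B
  have hBmeas : MeasurableSet B := by rw [hBpre]; exact hΘinv hS
  have hCmeas : MeasurableSet C := by rw [hCpre]; exact hΘinv hBmeas
  -- preimage identities
  have hpreS : Θ ⁻¹' S = C := by
    ext x
    simp only [Set.mem_preimage, hCdef, Set.image_image]
    constructor
    · intro h
      exact ⟨Θ x, h, hΘ3 x⟩
    · rintro ⟨y, hy, rfl⟩
      simpa [hΘ3] using hy
  have hpre2S : (fun x => Θ (Θ x)) ⁻¹' S = B := by
    ext x
    simp only [Set.mem_preimage, hBpre, ← hsymm_eq]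
  have hpre2B : (fun x => Θ (Θ x)) ⁻¹' B = C := by
    ext x
    simp only [Set.mem_preimage, hCpre, ← hsymm_eq]
  -- measure preserving facts
  have hΘsym : MeasurePreserving (Θ.symm : X → X) μ μ :=
    MeasurePreserving.symm Θm hΘpres
  have hpresB : MeasurePreserving (Θ.symm : X → X) (μ.restrict B) (μ.restrict S) := by
    rw [hBpre]
    exact hΘsym.restrict_preimage hS
  have hpresC : MeasurePreserving (Θ.symm : X → X) (μ.restrict C) (μ.restrict B) := by
    rw [hCpre]
    exact hΘsym.restrict_preimage hBmeas
  -- MemLp facts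
  have hψB : MemLp (fun x => ψ (Θ.symm x)) 2 (μ.restrict B) :=
    hψ.comp_measurePreserving hpresB
  have hψC : MemLp (fun x => ψ (Θ.symm (Θ.symm x))) 2 (μ.restrict C) :=
    hψB.comp_measurePreserving hpresC
  have hstar : ∀ (ν : Measure X) (g : X → ℂ), MemLp g 2 ν →
      MemLp (fun x => (starRingEnd ℂ) (g x)) 2 ν := by
    intro ν g hg
    refine hg.of_le ?_ (Filter.Eventually.of_forall fun x => by simp)
    exact (RCLike.continuous_conj.comp_aestronglyMeasurable hg.aestronglyMeasurable)
  have honehalf : (1 : ENNReal) / 1 = 1 / 2 + 1 / 2 := by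
    simp only [one_div, inv_one]
    exact ENNReal.inv_two_add_inv_two.symm
  have hmul : ∀ (ν : Measure X) (g : X → ℂ), MemLp φ 2 ν → MemLp g 2 ν →
      Integrable (fun x => φ x * (starRingEnd ℂ) (g x)) ν := by
    intro ν g hφν hgν
    have := (hstar ν g hgν).smul (r := 1) hφν
    rw [memLp_one_iff_integrable] at this
    exact this
  -- a.e. descriptions of Eψ on each piece
  have hfS : f =ᵐ[μ.restrict S] fun x => φ x * (starRingEnd ℂ) (ψ x) := by
    filter_upwards [ae_restrict_mem hS] with x hx
    simp [hfdef, hEψ, hx]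
  have hnotS_onB : ∀ᵐ x ∂μ.restrict S, Θ x ∉ S := by
    rw [ae_restrict_iff' hS]
    rw [ae_iff]
    have : {x | ¬ (x ∈ S → Θ x ∉ S)} ⊆ S ∩ C := by
      intro x hx
      simp only [Set.mem_setOf_eq, Classical.not_imp, not_not] at hx
      exact ⟨hx.1, hpreS ▸ hx.2⟩
    exact measure_mono_null this h02
  have hfB : f =ᵐ[μ.restrict B] fun x => φ x * (starRingEnd ℂ) (ψ (Θ.symm x)) := by
    have h1 : ∀ᵐ x ∂μ.restrict B, x ∉ S := by
      rw [ae_restrict_iff' hBmeas, ae_iff]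
      refine measure_mono_null (fun x hx => ?_) h01
      simp only [Set.mem_setOf_eq, Classical.not_imp, not_not] at hx
      exact ⟨hx.2, hx.1⟩
    filter_upwards [ae_restrict_mem hBmeas, h1] with x hxB hxS
    simp [hfdef, hEψ, hxS, hxB]
  have hfC : f =ᵐ[μ.restrict C] fun x => φ x * (starRingEnd ℂ) (ψ (Θ.symm (Θ.symm x))) := by
    have h1 : ∀ᵐ x ∂μ.restrict C, x ∉ S := by
      rw [ae_restrict_iff' hCmeas, ae_iff]
      refine measure_mono_null (fun x hx => ?_) h02
      simp only [Set.mem_setOf_eq, Classical.not_imp, not_not] at hx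
      exact ⟨hx.2, hx.1⟩
    have h2 : ∀ᵐ x ∂μ.restrict C, x ∉ B := by
      rw [ae_restrict_iff' hCmeas, ae_iff]
      refine measure_mono_null (fun x hx => ?_) h12
      simp only [Set.mem_setOf_eq, Classical.not_imp, not_not] at hx
      exact ⟨hx.2, hx.1⟩
    filter_upwards [h1, h2] with x hxS hxB
    simp [hfdef, hEψ, hxS, hxB]
  -- Integrability on each piece
  have hIS : IntegrableOn f S μ :=
    (Integrable.congr (hmul _ ψ (hφ.restrict S) hψ) hfS.symm)
  have hIB : IntegrableOn f B μ :=
    (Integrable.congr (hmul _ _ (hφ.restrict B) hψB) hfB.symm)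
  have hIC : IntegrableOn f C μ :=
    (Integrable.congr (hmul _ _ (hφ.restrict C) hψC) hfC.symm)
  -- the integral over S
  have hIntS : ∫ x in S, f x ∂μ = ∫ x in S, φ x * (starRingEnd ℂ) (ψ x) ∂μ :=
    integral_congr_ae hfS
  -- the integral over B equals the integral over S
  have hφ2 : ((φ ∘ Θ) ∘ Θ) =ᵐ[μ] φ :=
    (hΘpres.quasiMeasurePreserving.ae_eq_comp hφΘ).trans hφΘ
  have hIntB : ∫ x in B, f x ∂μ = ∫ x in S, φ x * (starRingEnd ℂ) (ψ x) ∂μ := by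
    rw [hBdef, hΘpres.setIntegral_image_emb hemb f S]
    refine integral_congr_ae ?_
    filter_upwards [ae_restrict_mem hS, hnotS_onB, ae_restrict_of_ae hφΘ] with x hxS hΘxS hφx
    have hΘxB : Θ x ∈ B := ⟨x, hxS, rfl⟩
    simp only [hfdef, hEψ, if_neg hΘxS, if_pos hΘxB, Equiv.symm_apply_apply]
    rw [show φ (Θ x) = φ x from hφx]
  -- the integral over C equals the integral over S
  have hIntC : ∫ x in C, f x ∂μ = ∫ x in S, φ x * (starRingEnd ℂ) (ψ x) ∂μ := by
    have hnotS2 : ∀ᵐ x ∂μ.restrict S, Θ (Θ x) ∉ S := by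
      rw [ae_restrict_iff' hS, ae_iff]
      refine measure_mono_null (fun x hx => ?_) h01
      simp only [Set.mem_setOf_eq, Classical.not_imp, not_not] at hx
      exact ⟨hx.1, hpre2S ▸ hx.2⟩
    have hnotB2 : ∀ᵐ x ∂μ.restrict S, Θ (Θ x) ∉ B := by
      rw [ae_restrict_iff' hS, ae_iff]
      refine measure_mono_null (fun x hx => ?_) h02
      simp only [Set.mem_setOf_eq, Classical.not_imp, not_not] at hx
      exact ⟨hx.1, hpre2B ▸ hx.2⟩
    rw [hCdef, hΘpres.setIntegral_image_emb hemb f (Θ '' S),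
      hΘpres.setIntegral_image_emb hemb (fun x => f (Θ x)) S]
    refine integral_congr_ae ?_
    filter_upwards [hnotS2, hnotB2, ae_restrict_of_ae hφ2] with x hxS hxB hφx
    simp only [hfdef, hEψ, if_neg hxS, if_neg hxB]
    have : Θ.symm (Θ.symm (Θ (Θ x))) = x := by
      simp
    rw [this, show φ (Θ (Θ x)) = φ x from hφx]
  -- split the full integral
  have hUmeas : MeasurableSet (S ∪ B ∪ C) := (hS.union hBmeas).union hCmeas
  have hres : μ.restrict (S ∪ B ∪ C) = μ := by
    apply Measure.restrict_eq_self_of_ae_mem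
    rw [ae_iff]
    exact hcover
  have hdisj1 : AEDisjoint μ (S ∪ B) C := by
    refine measure_mono_null (fun x hx => ?_) (measure_union_null h02 h12)
    rcases hx with ⟨hx1 | hx1, hx2⟩
    · exact Or.inl ⟨hx1, hx2⟩
    · exact Or.inr ⟨hx1, hx2⟩
  have hsplit : ∫ x, f x ∂μ
      = ∫ x in S, f x ∂μ + ∫ x in B, f x ∂μ + ∫ x in C, f x ∂μ := by
    conv_lhs => rw [← hres]
    rw [integral_union_ae hdisj1 hCmeas.nullMeasurableSet (hIS.union hIB) hIC,
      integral_union_ae h01 hBmeas.nullMeasurableSet hIS hIB]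
  rw [show (∫ x, φ x * (starRingEnd ℂ) (Eψ x) ∂μ) = ∫ x, f x ∂μ from rfl, hsplit,
    hIntB, hIntC, hIntS]
  ring
end
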